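/- Let f, g ∈ ℚ[z₁,…,zₙ] be polynomials of total degree at most d, let S = {1, 2, …, 2d²+1} ⊆ ℚ, and let α ∈ ℚⁿ with g(α) ≠ 0. Then there exist constants c_{β,i} ∈ ℚ for β ∈ S and 0 ≤ i ≤ d such that, defining h̃(z₁,…,zₙ) = Σ_{β ∈ S} f(βz₁+α₁,…,βzₙ+αₙ) · Σ_{i=0}^{d} c_{β,i} · g(βz₁+α₁,…,βzₙ+αₙ)^i, one has: g divides f in ℚ[z₁,…,zₙ] if and only if f(z₁+α₁,…,zₙ+αₙ) = g(z₁+α₁,…,zₙ+αₙ) · h̃(z₁,…,zₙ). -/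

import Mathlib

open MvPolynomial

open AddMonoidAlgebra


variable {n : ℕ}

lemma coeff_scale (b : ℚ) (p : MvPolynomial (Fin n) ℚ) (m : Fin n →₀ ℕ) :
    coeff m (aeval (fun i => C b * X i) p) = b ^ (m.sum fun _ e => e) * coeff m p := by
  induction p using MvPolynomial.induction_on' with
  | add p q hp hq => rw [map_add, MvPolynomial.coeff_add, MvPolynomial.coeff_add, hp, hq, mul_add]
  | monomial u c =>
    rw [aeval_monomial]
    have h1 : (u.prod fun i e => ((C b * X i : MvPolynomial (Fin n) ℚ)) ^ e) =
        C (b ^ (u.sum fun _ e => e)) * u.prod fun i e => (X i : MvPolynomial (Fin n) ℚ) ^ e := by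
      rw [Finsupp.prod, Finsupp.prod, Finsupp.sum]
      simp_rw [mul_pow, ← C_pow]
      rw [Finset.prod_mul_distrib, ← map_prod, Finset.prod_pow_eq_pow_sum]
    rw [h1, ← mul_assoc]
    have h2 : (algebraMap ℚ (MvPolynomial (Fin n) ℚ)) c * C (b ^ (u.sum fun _ e => e))
        = C (b ^ (u.sum fun _ e => e) * c) := by
      rw [algebraMap_eq, ← map_mul, mul_comm]
    rw [h2, ← monomial_eq, MvPolynomial.coeff_monomial, MvPolynomial.coeff_monomial]
    split
    · next h => subst h; rfl
    · ring

variable {n : ℕ}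

lemma totalDegree_aeval_le (s : Fin n → MvPolynomial (Fin n) ℚ) (hs : ∀ i, (s i).totalDegree ≤ 1)
    (p : MvPolynomial (Fin n) ℚ) : (aeval s p).totalDegree ≤ p.totalDegree := by
  conv_lhs => rw [p.as_sum]
  rw [map_sum]
  refine (totalDegree_finset_sum _ _).trans ?_
  apply Finset.sup_le; intro u hu
  refine le_trans ?_ (le_totalDegree hu)
  rw [aeval_monomial]
  refine (totalDegree_mul _ _).trans ?_
  rw [algebraMap_eq, totalDegree_C, zero_add, Finsupp.prod, Finsupp.sum]
  refine (totalDegree_finset_prod _ _).trans ?_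
  apply Finset.sum_le_sum; intro i _
  refine (totalDegree_pow _ _).trans ?_
  calc u i * (s i).totalDegree ≤ u i * 1 := Nat.mul_le_mul_left _ (hs i)
    _ = u i := Nat.mul_one _

lemma coeff_pow_eq_zero {p : MvPolynomial (Fin n) ℚ} (hp : constantCoeff p = 0) (k : ℕ) :
    ∀ m : Fin n →₀ ℕ, (m.sum fun _ e => e) < k → coeff m (p ^ k) = 0 := by
  induction k with
  | zero => intro m hm; omega
  | succ k ih =>
    intro m hm
    rw [pow_succ, MvPolynomial.coeff_mul]
    apply Finset.sum_eq_zero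
    rintro ⟨m1, m2⟩ hmem
    rw [Finset.HasAntidiagonal.mem_antidiagonal] at hmem
    rcases eq_or_ne m2 0 with h2 | h2
    · subst h2
      have : coeff (0 : Fin n →₀ ℕ) p = 0 := hp
      simp [this]
    · have hsum : (m1.sum fun _ e => e) + (m2.sum fun _ e => e) = m.sum fun _ e => e := by
        rw [← hmem]; exact (Finsupp.sum_add_index' (fun _ => rfl) (fun _ _ _ => rfl)).symm
      have h2pos : 0 < m2.sum fun _ e => e := by
        obtain ⟨a, ha⟩ := Finsupp.ne_iff.mp h2
        have ha0 : m2 a ≠ 0 := by simpa using ha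
        have ha' : a ∈ m2.support := Finsupp.mem_support_iff.mpr ha0
        rw [Finsupp.sum]
        exact lt_of_lt_of_le (Nat.pos_of_ne_zero ha0)
          (Finset.single_le_sum (fun i _ => Nat.zero_le (m2 i)) ha')
      have : (m1.sum fun _ e => e) < k := by omega
      rw [ih m1 this, zero_mul]

variable {n : ℕ}

noncomputable def Dlex (n : ℕ) : (Fin n →₀ ℕ) → ℕ ×ₗ Lex (Fin n →₀ ℕ) :=
  fun m => toLex (m.sum fun _ e => e, toLex m)

lemma Dlex_inj : Function.Injective (Dlex n) := by
  intro a b hab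
  have := congrArg (fun x => (ofLex x).2) hab
  simpa [Dlex] using this

lemma Dlex_add (a b : Fin n →₀ ℕ) : Dlex n (a + b) = Dlex n a + Dlex n b := by
  unfold Dlex
  have h : ((a+b).sum fun _ e => e) = (a.sum fun _ e => e) + (b.sum fun _ e => e) :=
    Finsupp.sum_add_index' (fun _ => rfl) (fun _ _ _ => rfl)
  rw [h]
  rfl

lemma fst_mono {x y : ℕ ×ₗ Lex (Fin n →₀ ℕ)} (h : x ≤ y) : (ofLex x).1 ≤ (ofLex y).1 := by
  rcases Prod.lex_iff.mp h with h1 | h1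
  · exact le_of_lt h1
  · exact le_of_eq h1.1

lemma totalDegree_eq_supD {p : MvPolynomial (Fin n) ℚ} (hp : p ≠ 0) :
    (ofLex (supDegree (Dlex n) p)).1 = p.totalDegree := by
  apply le_antisymm
  · obtain ⟨a, ha, h⟩ := exists_supDegree_mem_support (Dlex n) hp
    rw [h]
    exact le_totalDegree ha
  · rw [totalDegree]
    apply Finset.sup_le
    intro m hm
    exact fst_mono (Finset.le_sup (f := Dlex n) hm)

lemma totalDegree_mul_eq {p q : MvPolynomial (Fin n) ℚ} (hp : p ≠ 0) (hq : q ≠ 0) :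
    (p * q).totalDegree = p.totalDegree + q.totalDegree := by
  have hlc : leadingCoeff (Dlex n) p * leadingCoeff (Dlex n) q ≠ 0 := by
    apply mul_ne_zero <;> rw [Ne, leadingCoeff_eq_zero Dlex_inj] <;> assumption
  have hsup := supDegree_mul Dlex_inj Dlex_add hlc hp hq
  have hne : p * q ≠ 0 := mul_ne_zero hp hq
  have h1 := totalDegree_eq_supD (p := p * q) hne
  rw [hsup] at h1
  rw [← h1]
  have : (ofLex (supDegree (Dlex n) p + supDegree (Dlex n) q)).1
      = (ofLex (supDegree (Dlex n) p)).1 + (ofLex (supDegree (Dlex n) q)).1 := rfl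
  rw [this, totalDegree_eq_supD hp, totalDegree_eq_supD hq]

noncomputable def lam (d : ℕ) (β : ℕ) : ℚ :=
  ∑ j ∈ Finset.range (d+1),
    (Lagrange.basis (Finset.Icc 1 (2*d^2+1)) (fun m : ℕ => (m:ℚ)) β).coeff j

lemma sum_lam_pow (d k : ℕ) (hk : k ≤ 2*d^2) :
    ∑ β ∈ Finset.Icc 1 (2*d^2+1), lam d β * (β:ℚ)^k = if k ≤ d then 1 else 0 := by
  have hvs : Set.InjOn (fun m : ℕ => (m:ℚ)) (Finset.Icc 1 (2*d^2+1) : Finset ℕ) :=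
    fun a _ b _ h => Nat.cast_injective h
  have hdeg : (Polynomial.X ^ k : Polynomial ℚ).degree < (Finset.Icc 1 (2*d^2+1)).card := by
    rw [Polynomial.degree_X_pow, Nat.card_Icc]
    norm_cast; omega
  have h := Lagrange.eq_interpolate hvs hdeg
  have h2 := congrArg (fun p : Polynomial ℚ => ∑ j ∈ Finset.range (d+1), p.coeff j) h
  simp only [Lagrange.interpolate_apply, Polynomial.eval_pow, Polynomial.eval_X,
    Polynomial.finset_sum_coeff, Polynomial.coeff_C_mul, Polynomial.coeff_X_pow] at h2
  rw [Finset.sum_comm] at h2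
  have hLHS : (∑ x ∈ Finset.range (d+1), if x = k then (1:ℚ) else 0)
      = if k ≤ d then 1 else 0 := by
    rw [Finset.sum_ite_eq' (Finset.range (d+1)) k (fun _ => (1:ℚ))]
    simp [Nat.lt_succ_iff]
  rw [hLHS] at h2
  rw [h2]
  apply Finset.sum_congr rfl
  intro β _
  rw [lam, Finset.sum_mul]
  apply Finset.sum_congr rfl
  intro j _
  ring

lemma shift_inj (α : Fin n → ℚ) :
    Function.Injective (aeval (fun i => X i + C (α i)) :
      MvPolynomial (Fin n) ℚ →ₐ[ℚ] MvPolynomial (Fin n) ℚ) := by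
  intro p q h
  have key : ∀ r : MvPolynomial (Fin n) ℚ,
      aeval (fun i => X i - C (α i)) (aeval (fun i => X i + C (α i)) r) = r := by
    intro r
    rw [comp_aeval_apply]
    have harg : (fun i => (aeval fun i => X i - C (α i) : MvPolynomial (Fin n) ℚ →ₐ[ℚ]
        MvPolynomial (Fin n) ℚ) (X i + C (α i)))
        = (X : Fin n → MvPolynomial (Fin n) ℚ) := by
      funext i
      simp [algebraMap_eq]
    rw [harg, aeval_X_left_apply]
  rw [← key p, ← key q, h]

set_option maxHeartbeats 1000000 in
/-- (Forbes' divisibility-to-PIT reduction.) For `f, g ∈ ℚ[z₁,…,zₙ]` of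
total degree at most `d`, `S = {1,…,2d²+1}` and `α ∈ ℚⁿ` with `g(α) ≠ 0`, there are
constants `c_{β,i} ∈ ℚ` (`β ∈ S`, `0 ≤ i ≤ d`) such that with
`h̃ = Σ_{β ∈ S} f(βz+α) Σ_{i=0}^d c_{β,i} g(βz+α)^i` one has
`g ∣ f ↔ f(z+α) = g(z+α)·h̃`. -/
theorem stmt6 (n d : ℕ) (f g : MvPolynomial (Fin n) ℚ)
    (hf : f.totalDegree ≤ d) (hg : g.totalDegree ≤ d)
    (α : Fin n → ℚ) (hα : MvPolynomial.eval α g ≠ 0) :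
    ∃ c : ℕ → ℕ → ℚ,
      (g ∣ f ↔
        MvPolynomial.aeval (fun i => MvPolynomial.X i + MvPolynomial.C (α i)) f =
          MvPolynomial.aeval (fun i => MvPolynomial.X i + MvPolynomial.C (α i)) g *
            ∑ β ∈ Finset.Icc (1 : ℕ) (2 * d ^ 2 + 1),
              MvPolynomial.aeval
                  (fun i => MvPolynomial.C (β : ℚ) * MvPolynomial.X i + MvPolynomial.C (α i)) f *
                ∑ i ∈ Finset.range (d + 1),
                  MvPolynomial.C (c β i) *
                    (MvPolynomial.aeval
                      (fun j => MvPolynomial.C (β : ℚ) * MvPolynomial.X j +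
                        MvPolynomial.C (α j)) g) ^ i) := by
  classical
  by_cases hdvd : g ∣ f
  case neg =>
    refine ⟨fun _ _ => 0, ?_⟩
    have hf0 : f ≠ 0 := fun h => hdvd (h ▸ dvd_zero g)
    have hne : (aeval (fun i => X i + C (α i)) f : MvPolynomial (Fin n) ℚ) ≠ 0 := by
      intro h
      apply hf0
      apply shift_inj α
      simpa using h
    simp only [C_0, zero_mul, Finset.sum_const_zero, mul_zero]
    exact iff_of_false hdvd hne
  case pos =>
    obtain ⟨q, hq⟩ := hdvd
    have hg0 : g ≠ 0 := by rintro rfl; simp at hα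
    set γ : ℚ := eval α g with hγdef
    have hγ0 : γ ≠ 0 := hα
    have hd2 : d ≤ 2 * d ^ 2 := by
      rcases Nat.eq_zero_or_pos d with h | h
      · simp [h]
      · calc d = 1 * d := (one_mul d).symm
          _ ≤ (2*d) * d := Nat.mul_le_mul_right d (by omega)
          _ = 2 * d^2 := by ring
    have hd3 : d + d * d ≤ 2 * d ^ 2 := by
      rcases Nat.eq_zero_or_pos d with h | h
      · simp [h]
      · have h1 : d ≤ d * d := Nat.le_mul_of_pos_left d h
        have h2 : 2 * d ^ 2 = d * d + d * d := by ring
        omega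
    -- the univariate correction polynomial
    set P : Polynomial ℚ := ∑ i ∈ Finset.range (d+1),
        Polynomial.C γ⁻¹ * (1 - Polynomial.C γ⁻¹ * Polynomial.X) ^ i with hPdef
    have hPdeg : P.natDegree < d + 1 := by
      have h1 : P.natDegree ≤ d := by
        apply Polynomial.natDegree_sum_le_of_forall_le
        intro i hi
        refine (Polynomial.natDegree_mul_le).trans ?_
        rw [Polynomial.natDegree_C, zero_add]
        refine (Polynomial.natDegree_pow_le).trans ?_
        have hx : (1 - Polynomial.C γ⁻¹ * Polynomial.X : Polynomial ℚ).natDegree ≤ 1 := by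
          refine (Polynomial.natDegree_sub_le _ _).trans ?_
          simp only [Polynomial.natDegree_one, Nat.max_le]
          exact ⟨Nat.zero_le _, (Polynomial.natDegree_C_mul_le _ _).trans (by simp)⟩
        have hi' : i ≤ d := by simpa [Nat.lt_succ_iff] using hi
        calc i * (1 - Polynomial.C γ⁻¹ * Polynomial.X : Polynomial ℚ).natDegree
            ≤ i * 1 := Nat.mul_le_mul_left _ hx
          _ = i := Nat.mul_one _
          _ ≤ d := hi'
      omega
    refine ⟨fun β i => lam d β * P.coeff i, ?_⟩
    -- notation
    set τ : MvPolynomial (Fin n) ℚ →ₐ[ℚ] MvPolynomial (Fin n) ℚ :=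
      aeval (fun i => X i + C (α i)) with hτdef
    set ft := τ f with hftdef
    set gt := τ g with hgtdef
    set qt := τ q with hqtdef
    set w : MvPolynomial (Fin n) ℚ := 1 - C γ⁻¹ * gt with hwdef
    -- degree bounds after shifting
    have hshift_deg : ∀ p : MvPolynomial (Fin n) ℚ, (τ p).totalDegree ≤ p.totalDegree := by
      intro p
      apply totalDegree_aeval_le
      intro i
      refine (totalDegree_add _ _).trans ?_
      simp [totalDegree_X, totalDegree_C]
    have hqd : q.totalDegree ≤ d := by
      rcases eq_or_ne f 0 with hf0 | hf0
      · have : q = 0 := by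
          rcases mul_eq_zero.mp (hf0 ▸ hq.symm) with h | h
          · exact absurd h hg0
          · exact h
        simp [this]
      · have hq0 : q ≠ 0 := by
          intro h; apply hf0; rw [hq, h, mul_zero]
        have hmul := totalDegree_mul_eq hg0 hq0
        rw [← hq] at hmul
        omega
    have hftd : ft.totalDegree ≤ d := le_trans (hshift_deg f) hf
    have hgtd : gt.totalDegree ≤ d := le_trans (hshift_deg g) hg
    have hqtd : qt.totalDegree ≤ d := le_trans (hshift_deg q) hqd
    have hwd : w.totalDegree ≤ d := by
      rw [hwdef]
      refine (totalDegree_sub _ _).trans ?_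
      simp only [totalDegree_one, Nat.max_le, Nat.zero_le, true_and]
      refine (totalDegree_mul _ _).trans ?_
      simpa [totalDegree_C] using hgtd
    -- constant coefficient of w is zero
    have hgt0 : constantCoeff gt = γ := by
      rw [hgtdef, hτdef]
      have h1 : constantCoeff (aeval (fun i => X i + C (α i)) g)
          = aeval (fun _ => (0:ℚ)) (aeval (fun i => X i + C (α i)) g) := by
        rw [aeval_zero']; rfl
      rw [h1, comp_aeval_apply]
      have h2 : (fun i => aeval (fun _ => (0:ℚ)) (X i + C (α i))) = α := by
        funext i; simp
      rw [h2, hγdef]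
      rw [← coe_aeval_eq_eval]; rfl
    have hw0 : constantCoeff w = 0 := by
      rw [hwdef, map_sub, map_one, map_mul, constantCoeff_C, hgt0]
      field_simp
      simp
    -- the geometric series identity
    have e1 : (Polynomial.aeval gt P : MvPolynomial (Fin n) ℚ)
        = ∑ i ∈ Finset.range (d+1), C γ⁻¹ * w ^ i := by
      rw [hPdef, map_sum]
      apply Finset.sum_congr rfl
      intro i _
      simp only [map_mul, map_pow, map_sub, map_one, Polynomial.aeval_X,
        Polynomial.aeval_C, algebraMap_eq]
      rw [hwdef]
    have F1 : gt * Polynomial.aeval gt P = 1 - w ^ (d+1) := by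
      rw [e1, Finset.mul_sum]
      have hgw : gt * C γ⁻¹ = 1 - w := by rw [hwdef]; ring
      have step : ∀ i ∈ Finset.range (d+1), gt * (C γ⁻¹ * w ^ i) = (1 - w) * w ^ i := by
        intro i _; rw [← mul_assoc, hgw]
      rw [Finset.sum_congr rfl step, ← Finset.mul_sum]
      have hgs := geom_sum_mul w (d+1)
      linear_combination -hgs
    -- H and its properties
    set H : MvPolynomial (Fin n) ℚ := ft * Polynomial.aeval gt P with hHdef
    have hH : H = qt - qt * w ^ (d+1) := by
      rw [hHdef, hftdef, hq, map_mul, ← hgtdef, ← hqtdef, mul_comm gt qt, mul_assoc, F1]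
      ring
    have hHd : H.totalDegree ≤ d + d * d := by
      rw [hHdef]
      refine (totalDegree_mul _ _).trans ?_
      apply Nat.add_le_add hftd
      rw [e1]
      refine (totalDegree_finset_sum _ _).trans ?_
      apply Finset.sup_le
      intro i hi
      refine (totalDegree_mul _ _).trans ?_
      rw [totalDegree_C, zero_add]
      refine (totalDegree_pow _ _).trans ?_
      have hi' : i ≤ d := by simpa [Nat.lt_succ_iff] using hi
      exact Nat.mul_le_mul hi' hwd
    -- coefficient facts for H
    have hHcoeff_low : ∀ m : Fin n →₀ ℕ, (m.sum fun _ e => e) ≤ d →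
        coeff m H = coeff m qt := by
      intro m hm
      rw [hH, MvPolynomial.coeff_sub]
      have hz : coeff m (qt * w ^ (d+1)) = 0 := by
        rw [MvPolynomial.coeff_mul]
        apply Finset.sum_eq_zero
        rintro ⟨m1, m2⟩ hmem
        rw [Finset.HasAntidiagonal.mem_antidiagonal] at hmem
        have hsum : (m1.sum fun _ e => e) + (m2.sum fun _ e => e) = m.sum fun _ e => e := by
          rw [← hmem]; exact (Finsupp.sum_add_index' (fun _ => rfl) (fun _ _ _ => rfl)).symm
        have hlt : (m2.sum fun _ e => e) < d + 1 := by omega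
        rw [coeff_pow_eq_zero hw0 (d+1) m2 hlt, mul_zero]
      rw [hz, sub_zero]
    -- scaling homomorphisms
    have hscale : ∀ (β : ℕ) (p : MvPolynomial (Fin n) ℚ),
        aeval (fun i => C (β:ℚ) * X i + C (α i)) p
          = aeval (fun i => C (β:ℚ) * X i) (τ p) := by
      intro β p
      have harg : (fun i => (aeval fun i => C (β:ℚ) * X i : MvPolynomial (Fin n) ℚ →ₐ[ℚ]
          MvPolynomial (Fin n) ℚ) (X i + C (α i))) = fun i => C (β:ℚ) * X i + C (α i) := by
        funext i
        simp [algebraMap_eq]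
      rw [hτdef, comp_aeval_apply, harg]
    -- the key coefficient computation
    have key : ∑ β ∈ Finset.Icc (1:ℕ) (2*d^2+1),
        (lam d β) • (aeval (fun i => C (β:ℚ) * X i) H) = qt := by
      apply MvPolynomial.ext
      intro m
      rw [MvPolynomial.coeff_sum]
      simp_rw [MvPolynomial.coeff_smul, coeff_scale, smul_eq_mul]
      have hfold : ∑ β ∈ Finset.Icc (1:ℕ) (2*d^2+1),
          lam d β * ((β:ℚ) ^ (m.sum fun _ e => e) * coeff m H)
          = (∑ β ∈ Finset.Icc (1:ℕ) (2*d^2+1), lam d β * (β:ℚ) ^ (m.sum fun _ e => e))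
              * coeff m H := by
        rw [Finset.sum_mul]
        apply Finset.sum_congr rfl
        intro β _
        ring
      rw [hfold]
      set k := m.sum fun _ e => e with hkdef
      have hksup : (∑ i ∈ m.support, m i) = k := rfl
      by_cases hk1 : k ≤ d
      · rw [sum_lam_pow d k (le_trans hk1 hd2), if_pos hk1, one_mul]
        exact hHcoeff_low m hk1
      · have hqt0 : coeff m qt = 0 := by
          apply coeff_eq_zero_of_totalDegree_lt
          omega
        by_cases hk2 : k ≤ 2*d^2
        · rw [sum_lam_pow d k hk2, if_neg hk1, zero_mul, hqt0]
        · have hH0 : coeff m H = 0 := by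
            apply coeff_eq_zero_of_totalDegree_lt
            omega
          rw [hH0, mul_zero, hqt0]
    -- rewrite the big sum
    have hsum_eq : ∑ β ∈ Finset.Icc (1:ℕ) (2*d^2+1),
        (aeval (fun i => C (β:ℚ) * X i + C (α i)) f *
          ∑ i ∈ Finset.range (d+1),
            C (lam d β * P.coeff i) *
              (aeval (fun j => C (β:ℚ) * X j + C (α j)) g) ^ i)
        = ∑ β ∈ Finset.Icc (1:ℕ) (2*d^2+1),
            (lam d β) • (aeval (fun i => C (β:ℚ) * X i) H) := by
      apply Finset.sum_congr rfl
      intro β _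
      have hinner : ∑ i ∈ Finset.range (d+1),
          C (lam d β * P.coeff i) * (aeval (fun j => C (β:ℚ) * X j + C (α j)) g) ^ i
          = C (lam d β) *
              Polynomial.aeval (aeval (fun j => C (β:ℚ) * X j + C (α j)) g) P := by
        rw [Polynomial.aeval_eq_sum_range' hPdeg, Finset.mul_sum]
        apply Finset.sum_congr rfl
        intro i _
        rw [smul_eq_C_mul, C_mul]
        ring
      rw [hinner, hscale β f, hscale β g, ← hftdef, ← hgtdef, hHdef]
      rw [smul_eq_C_mul, map_mul, ← Polynomial.aeval_algHom_apply]
      ring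
    have hfinal : ft = gt * ∑ β ∈ Finset.Icc (1:ℕ) (2*d^2+1),
        (aeval (fun i => C (β:ℚ) * X i + C (α i)) f *
          ∑ i ∈ Finset.range (d+1),
            C (lam d β * P.coeff i) *
              (aeval (fun j => C (β:ℚ) * X j + C (α j)) g) ^ i) := by
      rw [hsum_eq, key, hftdef, hq, map_mul, ← hgtdef, ← hqtdef]
    exact iff_of_true ⟨q, hq⟩ hfinal
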